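/- arXiv:1703.02774 — 2 statements merged into one kernel-verified Lean document; each statement's English description precedes it below -/
import Mathlib

section
/- For Dyck paths D1 and D2 of the same size with D1 ⪯ D2 in the Tamari lattice, we have mir(D2) ⪯ mir(D1). -/
/-- A Dyck path: a word in `u = true`, `d = false` with equally many `u`'s and `d`'s,
every prefix of which has at least as many `u`'s as `d`'s. -/
def IsDyck (w : List Bool) : Prop :=
  w.count true = w.count false ∧ ∀ p, p <+: w → p.count false ≤ p.count true

/-- The number of non-initial contacts of a path: the number of nonempty balanced
prefixes. -/
def ncontacts (w : List Bool) : ℕ :=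
  ((List.range w.length).filter
    (fun j => (w.take (j + 1)).count true = (w.take (j + 1)).count false)).length

/-- The involution `mir` on Dyck paths, defined recursively by `mir ε = ε` and
`mir (D₁ u D₂ d) = mir D₂ u mir D₁ d`, where a nonempty Dyck path is uniquely
written `D₁ u D₂ d` with `D₁, D₂` Dyck paths and `D₂` starting right after the
last non-initial contact before the endpoint (so `D₁` is the longest proper
balanced prefix). -/
def mir (w : List Bool) : List Bool :=
  if hw : w = [] then []
  else
    let e := w.dropLast
    let j := ((List.range e.length).filter
      (fun j => (e.take j).count true = (e.take j).count false)).foldr max 0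
    mir (e.drop (j + 1)) ++ true :: (mir (e.take j) ++ [false])
termination_by w.length
decreasing_by
  all_goals
    have hp := List.length_pos_iff.mpr hw
    simp only [List.length_drop, List.length_take, List.length_dropLast]
    omega

/-- The Tamari covering relation: `D = V d D₁ W` covers `D' = V D₁ d W`, where `D₁`
is a nonempty Dyck path. `TCov D D'` means `D` covers `D'`. -/
inductive TCov : List Bool → List Bool → Prop where
  | mk (V W D1 : List Bool) (h : IsDyck D1) (hne : D1 ≠ []) :
      TCov (V ++ false :: (D1 ++ W)) (V ++ D1 ++ false :: W)

/-- The Tamari order: reflexive-transitive closure of the covering relation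
(`TamariLE D' D` holds when `D' ⪯ D`). -/
def TamariLE : List Bool → List Bool → Prop :=
  Relation.ReflTransGen (fun x y => TCov y x)

def bal (w : List Bool) : ℤ := (w.count true : ℤ) - (w.count false : ℤ)

@[simp] lemma bal_nil : bal [] = 0 := rfl
@[simp] lemma bal_append (a b : List Bool) : bal (a ++ b) = bal a + bal b := by
  simp [bal, List.count_append]; ring
@[simp] lemma bal_cons (c : Bool) (a : List Bool) :
    bal (c :: a) = (if c then 1 else -1) + bal a := by
  cases c <;> simp [bal, List.count_cons] <;> ring

lemma isDyck_iff {w : List Bool} :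
    IsDyck w ↔ bal w = 0 ∧ ∀ p, p <+: w → 0 ≤ bal p := by
  unfold IsDyck bal
  constructor
  · rintro ⟨h1, h2⟩
    exact ⟨by omega, fun p hp => by have := h2 p hp; omega⟩
  · rintro ⟨h1, h2⟩
    exact ⟨by omega, fun p hp => by have := h2 p hp; omega⟩

inductive MTree where
  | leaf : MTree
  | node : MTree → MTree → MTree

open MTree

def code : MTree → List Bool
  | .leaf => []
  | .node l r => code l ++ true :: (code r ++ [false])

def tmir : MTree → MTree
  | .leaf => .leaf
  | .node l r => .node (tmir r) (tmir l)

def graftL (x : MTree) : MTree → MTree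
  | .leaf => x
  | .node p q => .node (graftL x p) q

lemma prefix_append_cases {p a b : List Bool} (h : p <+: a ++ b) :
    p <+: a ∨ ∃ q, q <+: b ∧ p = a ++ q := by
  rcases le_or_gt p.length a.length with hl | hl
  · exact Or.inl (List.prefix_of_prefix_length_le h (List.prefix_append a b) hl)
  · right
    have ha : a <+: p := List.prefix_of_prefix_length_le (List.prefix_append a b) h hl.le
    obtain ⟨q, rfl⟩ := ha
    obtain ⟨t, ht⟩ := h
    refine ⟨q, ⟨t, ?_⟩, rfl⟩
    rw [List.append_assoc] at ht
    exact (List.append_cancel_left ht)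

lemma bal_code (T : MTree) : bal (code T) = 0 := by
  induction T with
  | leaf => simp [code]
  | node l r ihl ihr => simp [code, ihl, ihr]

lemma code_prefix_nonneg (T : MTree) : ∀ p, p <+: code T → 0 ≤ bal p := by
  induction T with
  | leaf => intro p hp; rw [code, List.prefix_nil] at hp; simp [hp]
  | node l r ihl ihr =>
    intro p hp
    simp only [code] at hp
    rcases prefix_append_cases hp with h | ⟨q, hq, rfl⟩
    · exact ihl p h
    · rcases q with _ | ⟨c, q⟩
      · simp only [List.append_nil]; rw [bal_code l]
      · rw [List.cons_prefix_cons] at hq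
        obtain ⟨rfl, hq⟩ := hq
        have hq' : (-1 : ℤ) ≤ bal q := by
          rcases prefix_append_cases hq with h | ⟨s, hs, rfl⟩
          · have := ihr q h; omega
          · have hs' : bal s = 0 ∨ bal s = -1 := by
              rcases s with _ | ⟨c, s⟩
              · left; rfl
              · rw [List.cons_prefix_cons] at hs
                obtain ⟨rfl, hs⟩ := hs
                rw [List.prefix_nil] at hs
                subst hs
                right; rfl
            simp [bal_code r]
            omega
        simp only [bal_append, bal_cons, bal_code l, if_true]
        omega

lemma code_dyck (T : MTree) : IsDyck (code T) :=
  isDyck_iff.mpr ⟨bal_code T, code_prefix_nonneg T⟩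

lemma le_foldr_max {x : ℕ} {l : List ℕ} (h : x ∈ l) : x ≤ l.foldr max 0 := by
  induction l with
  | nil => simp at h
  | cons a l ih =>
    rcases List.mem_cons.mp h with rfl | h
    · exact le_max_left _ _
    · exact le_trans (ih h) (le_max_right _ _)

lemma foldr_max_mem (l : List ℕ) : l.foldr max 0 ∈ l ∨ l.foldr max 0 = 0 := by
  induction l with
  | nil => right; rfl
  | cons a l ih =>
    simp only [List.foldr_cons]
    rcases max_cases a (l.foldr max 0) with ⟨h1, _⟩ | ⟨h1, _⟩
    · left; rw [h1]; exact List.mem_cons_self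
    · rw [h1]
      rcases ih with h | h
      · left; exact List.mem_cons_of_mem _ h
      · right; exact h

/-- prefixes of `code l ++ true :: code r` longer than `code l` have positive balance -/
lemma mid_prefix_pos (l r : MTree) {p : List Bool}
    (hp : p <+: code l ++ true :: code r) (hlen : (code l).length < p.length) :
    1 ≤ bal p := by
  rcases prefix_append_cases hp with h | ⟨q, hq, rfl⟩
  · have := h.length_le; omega
  · rcases q with _ | ⟨c, q⟩
    · simp at hlen
    · rw [List.cons_prefix_cons] at hq
      obtain ⟨rfl, hq⟩ := hq
      have := code_prefix_nonneg r q hq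
      simp only [bal_append, bal_cons, bal_code l, if_true]
      omega

/-- the `j` used in the definition of `mir` -/
def Jval (e : List Bool) : ℕ :=
  ((List.range e.length).filter
    (fun j => (e.take j).count true = (e.take j).count false)).foldr max 0

lemma Jval_code (l r : MTree) : Jval (code l ++ true :: code r) = (code l).length := by
  set e := code l ++ true :: code r with he
  have hlen : e.length = (code l).length + 1 + (code r).length := by simp [he]; omega
  have hmem : (code l).length ∈ (List.range e.length).filter
      (fun j => (e.take j).count true = (e.take j).count false) := by
    rw [List.mem_filter, List.mem_range]
    constructor
    · omega
    · have : e.take (code l).length = code l := by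
        rw [he, List.take_left]
      rw [this]
      have := bal_code l
      simp only [bal] at this
      simp only [decide_eq_true_eq]
      omega
  apply le_antisymm
  · have hJ := foldr_max_mem ((List.range e.length).filter
      (fun j => decide ((e.take j).count true = (e.take j).count false)))
    rw [show ((List.range e.length).filter
      (fun j => decide ((e.take j).count true = (e.take j).count false))).foldr max 0
      = Jval e from rfl] at hJ
    rcases hJ with h | h
    · rw [List.mem_filter, List.mem_range] at h
      obtain ⟨h1, h2⟩ := h
      by_contra hgt
      push_neg at hgt
      have hpre : e.take (Jval e) <+: e := List.take_prefix _ _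
      have hl2 : (code l).length < (e.take (Jval e)).length := by
        rw [List.length_take]
        omega
      have := mid_prefix_pos l r hpre hl2
      simp only [decide_eq_true_eq] at h2
      simp only [bal] at this
      omega
    · omega
  · exact le_foldr_max hmem

lemma mir_code (T : MTree) : mir (code T) = code (tmir T) := by
  induction T with
  | leaf =>
    rw [show code MTree.leaf = [] from rfl, mir]
    simp [tmir, code]
  | node l r ihl ihr =>
    have hne : code (MTree.node l r) ≠ [] := by simp [code]
    rw [mir, dif_neg hne]
    have hdl : (code (MTree.node l r)).dropLast = code l ++ true :: code r := by
      rw [code]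
      rw [show code l ++ true :: (code r ++ [false]) =
        (code l ++ true :: code r) ++ [false] by simp]
      exact List.dropLast_concat ..
    simp only [hdl]
    rw [show ((List.range (code l ++ true :: code r).length).filter
      (fun j => (((code l ++ true :: code r)).take j).count true =
        ((code l ++ true :: code r).take j).count false)).foldr max 0
      = Jval (code l ++ true :: code r) from rfl]
    rw [Jval_code]
    have h1 : (code l ++ true :: code r).drop ((code l).length + 1) = code r := by
      rw [show code l ++ true :: code r = (code l ++ [true]) ++ code r by simp]
      rw [List.drop_left']
      simp
    have h2 : (code l ++ true :: code r).take (code l).length = code l :=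
      List.take_left ..
    rw [h1, h2, ihl, ihr]
    simp [tmir, code]

lemma dyck_code_aux : ∀ n (w : List Bool), w.length ≤ n → IsDyck w → ∃ T, code T = w := by
  intro n
  induction n with
  | zero =>
    intro w hlen _
    rw [Nat.le_zero, List.length_eq_zero_iff] at hlen
    exact ⟨MTree.leaf, by rw [hlen]; rfl⟩
  | succ n ih =>
    intro w hlen hw
    rw [isDyck_iff] at hw
    obtain ⟨hb, hpre⟩ := hw
    rcases eq_or_ne w [] with rfl | hne
    · exact ⟨MTree.leaf, rfl⟩
    have hlast : w.getLast hne = false := by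
      by_contra hT
      rw [Bool.not_eq_false] at hT
      have hw2 : w = w.dropLast ++ [w.getLast hne] := (List.dropLast_append_getLast hne).symm
      have hbd : bal w.dropLast = -1 := by
        rw [hw2, bal_append, hT] at hb
        simp at hb
        omega
      have := hpre _ (List.dropLast_prefix w)
      omega
    have hwe : w = w.dropLast ++ [false] := by
      rw [← hlast]
      exact (List.dropLast_append_getLast hne).symm
    set e := w.dropLast with hee
    have hbe : bal e = 1 := by
      rw [hwe, bal_append] at hb
      simp at hb
      omega
    have hene : e ≠ [] := by
      intro h
      rw [h] at hbe
      simp at hbe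
    set j := Jval e with hj
    have hJ := foldr_max_mem ((List.range e.length).filter
      (fun i => decide ((e.take i).count true = (e.take i).count false)))
    rw [show ((List.range e.length).filter
      (fun i => decide ((e.take i).count true = (e.take i).count false))).foldr max 0
      = Jval e from rfl] at hJ
    have hjlt : j < e.length := by
      rcases hJ with h | h
      · rw [List.mem_filter, List.mem_range] at h
        exact h.1
      · rw [hj, h]
        exact List.length_pos_iff.mpr hene
    have hbj : bal (e.take j) = 0 := by
      rw [hj]
      rcases hJ with h | h
      · rw [List.mem_filter] at h
        have := h.2
        simp only [decide_eq_true_eq] at this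
        simp only [bal]
        omega
      · rw [h]
        simp
    have hmax : ∀ i, i < e.length → bal (e.take i) = 0 → i ≤ j := by
      intro i h1 h2
      apply le_foldr_max
      rw [List.mem_filter, List.mem_range]
      refine ⟨h1, ?_⟩
      simp only [decide_eq_true_eq]
      simp only [bal] at h2
      omega
    have hdrop : e.drop j = e[j] :: e.drop (j+1) := List.drop_eq_getElem_cons hjlt
    have htakes : e.take (j+1) = e.take j ++ [e[j]] := by
      rw [List.take_succ, List.getElem?_eq_getElem hjlt]
      simp
    have hchar : e[j] = true := by
      by_contra hc
      rw [Bool.not_eq_true] at hc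
      have hp : e.take (j+1) <+: w := (List.take_prefix _ _).trans (hwe ▸ List.prefix_append _ _)
      have := hpre _ hp
      rw [htakes, hc] at this
      simp at this
      omega
    have hesplit : e = e.take j ++ true :: e.drop (j+1) := by
      conv_lhs => rw [← List.take_append_drop j e]
      rw [hdrop, hchar]
    set w1 := e.take j with hw1
    set w2 := e.drop (j+1) with hw2
    have hlw1 : w1.length = j := by
      rw [hw1, List.length_take]
      omega
    have hd1 : IsDyck w1 := by
      rw [isDyck_iff]
      refine ⟨hbj, fun p hp => hpre p (hp.trans ((List.take_prefix _ _).trans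
        (hwe ▸ List.prefix_append _ _)))⟩
    have hbw2 : bal w2 = 0 := by
      rw [hesplit] at hbe
      simp only [bal_append, bal_cons, if_true] at hbe
      omega
    have hd2 : IsDyck w2 := by
      rw [isDyck_iff]
      refine ⟨hbw2, fun p hp => ?_⟩
      by_contra hneg
      push_neg at hneg
      obtain ⟨t, ht⟩ := hp
      have hq : (w1 ++ true :: p) <+: e := ⟨t, by rw [hesplit, ← ht]; simp⟩
      have hq0 : 0 ≤ bal (w1 ++ true :: p) :=
        hpre _ (hq.trans (hwe ▸ List.prefix_append _ _))
      have hbq : bal (w1 ++ true :: p) = 0 := by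
        simp only [bal_append, bal_cons, if_true] at hq0 ⊢
        omega
      have hbp : bal p = -1 := by
        simp only [bal_append, bal_cons, if_true, hbj] at hbq
        omega
      have hqlen : (w1 ++ true :: p).length = j + 1 + p.length := by
        simp [hlw1]
        omega
      rcases lt_or_eq_of_le hq.length_le with hlt | heq
      · have htk : w1 ++ true :: p = e.take (j + 1 + p.length) := by
          rw [← hqlen]
          exact List.prefix_iff_eq_take.mp hq
        have := hmax (j + 1 + p.length) (by omega) (by rw [← htk, hbq])
        omega
      · have : w1 ++ true :: p = e := hq.eq_of_length heq
        rw [← this] at hbe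
        omega
    have hlen2 : e.length = j + 1 + w2.length := by
      have := congrArg List.length hesplit
      simp [hlw1] at this
      omega
    have hlenw : w.length = e.length + 1 := by
      rw [hwe]
      simp
    obtain ⟨T1, hT1⟩ := ih w1 (by omega) hd1
    obtain ⟨T2, hT2⟩ := ih w2 (by omega) hd2
    refine ⟨MTree.node T1 T2, ?_⟩
    rw [code, hT1, hT2, hwe, hesplit]
    simp

lemma dyck_code {w : List Bool} (hw : IsDyck w) : ∃ T, code T = w :=
  dyck_code_aux w.length w le_rfl hw

lemma split_unique {x1 x2 y1 y2 : List Bool} (hx1 : bal x1 = 0) (hy1 : bal y1 = 0)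
    (hy2 : ∀ p, p <+: y2 → 0 ≤ bal p) (hlen : x2.length ≤ y2.length)
    (h : x1 ++ true :: x2 = y1 ++ true :: y2) : x1 = y1 ∧ x2 = y2 := by
  have hl : y1.length ≤ x1.length := by
    have := congrArg List.length h
    simp at this
    omega
  have hy1p : y1 <+: x1 := by
    refine List.prefix_of_prefix_length_le ?_ (List.prefix_append x1 (true :: x2)) hl
    rw [h]
    exact List.prefix_append _ _
  obtain ⟨Z, rfl⟩ := hy1p
  rw [List.append_assoc] at h
  have h2 : Z ++ true :: x2 = true :: y2 := List.append_cancel_left h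
  rcases Z with _ | ⟨c, Z⟩
  · simp at h2 ⊢
    exact h2
  · exfalso
    rw [List.cons_append, List.cons.injEq] at h2
    obtain ⟨rfl, h2⟩ := h2
    have hbZ : bal Z = -1 := by
      simp only [bal_append, bal_cons, if_true, hy1] at hx1
      omega
    have : Z <+: y2 := h2 ▸ List.prefix_append _ _
    have := hy2 _ this
    omega

lemma code_inj : ∀ A B : MTree, code A = code B → A = B := by
  intro A
  induction A with
  | leaf =>
    intro B h
    cases B with
    | leaf => rfl
    | node b1 b2 => rw [code, code] at h; simp at h
  | node a1 a2 ih1 ih2 =>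
    intro B h
    cases B with
    | leaf => rw [code, code] at h; simp at h
    | node b1 b2 =>
      rw [code, code] at h
      have h' : (code a1 ++ true :: code a2) ++ [false] =
          (code b1 ++ true :: code b2) ++ [false] := by
        rw [List.append_assoc, List.append_assoc]
        simpa using h
      have h'' : code a1 ++ true :: code a2 = code b1 ++ true :: code b2 :=
        List.append_cancel_right h'
      rcases le_total (code a2).length (code b2).length with hle | hle
      · obtain ⟨e1, e2⟩ := split_unique (bal_code a1) (bal_code b1)
          (code_prefix_nonneg b2) hle h''
        rw [ih1 _ e1, ih2 _ e2]
      · obtain ⟨e1, e2⟩ := split_unique (bal_code b1) (bal_code a1)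
          (code_prefix_nonneg a2) hle h''.symm
        rw [ih1 _ e1.symm, ih2 _ e2.symm]

lemma graftL_code (X : MTree) : ∀ P, code (graftL X P) = code X ++ code P := by
  intro P
  induction P with
  | leaf => simp [graftL, code]
  | node p q ih =>
    rw [graftL, code, ih, code]
    simp

inductive Rot : MTree → MTree → Prop
  | base (a b c) : Rot (.node (.node a b) c) (.node a (.node b c))
  | left {l l'} (r) : Rot l l' → Rot (.node l r) (.node l' r)
  | right (l) {r r'} : Rot r r' → Rot (.node l r) (.node l r')

def RotStar : MTree → MTree → Prop := Relation.ReflTransGen Rot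

lemma rotStar_left {l l' : MTree} (r : MTree) (h : RotStar l l') :
    RotStar (.node l r) (.node l' r) :=
  Relation.ReflTransGen.lift (fun x => MTree.node x r) (fun _ _ h => Rot.left r h) _ _ h

lemma rotStar_right (l : MTree) {r r' : MTree} (h : RotStar r r') :
    RotStar (.node l r) (.node l r') :=
  Relation.ReflTransGen.lift (fun x => MTree.node l x) (fun _ _ h => Rot.right l h) _ _ h

lemma rotStar_graft : ∀ (P X1 X2 R : MTree),
    RotStar (.node (graftL (.node X1 X2) P) R) (.node X1 (.node (graftL X2 P) R)) := by
  intro P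
  induction P with
  | leaf =>
    intro X1 X2 R
    exact Relation.ReflTransGen.single (Rot.base X1 X2 R)
  | node p q ih =>
    intro X1 X2 R
    have step1 : RotStar (.node (graftL (.node X1 X2) (.node p q)) R)
        (.node (.node X1 (.node (graftL X2 p) q)) R) := by
      rw [graftL]
      exact rotStar_left R (ih X1 X2 q)
    exact step1.trans (Relation.ReflTransGen.single
      (Rot.base X1 (.node (graftL X2 p) q) R))

lemma rot_tmir {a b : MTree} (h : Rot a b) : Rot (tmir b) (tmir a) := by
  induction h with
  | base a b c =>
    simp only [tmir]
    exact Rot.base (tmir c) (tmir b) (tmir a)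
  | left r _ ih => simp only [tmir]; exact Rot.right _ ih
  | right l _ ih => simp only [tmir]; exact Rot.left _ ih

lemma rotStar_tmir {a b : MTree} (h : RotStar a b) : RotStar (tmir b) (tmir a) := by
  induction h with
  | refl => exact Relation.ReflTransGen.refl
  | tail _ h2 ih => exact Relation.ReflTransGen.head (rot_tmir h2) ih

lemma tcov_append_right {x y : List Bool} (z : List Bool) (h : TCov x y) :
    TCov (x ++ z) (y ++ z) := by
  cases h with
  | mk V W D1 hd hne =>
    rw [show (V ++ false :: (D1 ++ W)) ++ z = V ++ false :: (D1 ++ (W ++ z)) by simp,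
      show (V ++ D1 ++ false :: W) ++ z = V ++ D1 ++ false :: (W ++ z) by simp]
    exact TCov.mk V (W ++ z) D1 hd hne

lemma tcov_append_left (z : List Bool) {x y : List Bool} (h : TCov x y) :
    TCov (z ++ x) (z ++ y) := by
  cases h with
  | mk V W D1 hd hne =>
    rw [show z ++ (V ++ false :: (D1 ++ W)) = (z ++ V) ++ false :: (D1 ++ W) by simp,
      show z ++ (V ++ D1 ++ false :: W) = (z ++ V) ++ D1 ++ false :: W by simp]
    exact TCov.mk (z ++ V) W D1 hd hne

lemma rot_tcov {a b : MTree} (h : Rot a b) : TCov (code a) (code b) := by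
  induction h with
  | base a b c =>
    have hd : IsDyck (true :: (code c ++ [false])) := by
      have := code_dyck (MTree.node MTree.leaf c)
      rw [code, code] at this
      simpa using this
    rw [show code (MTree.node (MTree.node a b) c)
        = (code a ++ true :: code b) ++ false :: ((true :: (code c ++ [false])) ++ [])
        by rw [code, code]; simp,
      show code (MTree.node a (MTree.node b c))
        = (code a ++ true :: code b) ++ (true :: (code c ++ [false])) ++ false :: []
        by rw [code, code]; simp]
    exact TCov.mk _ _ _ hd (by simp)
  | left r hr ih =>
    rename_i l l'
    rw [show code (MTree.node l r) = code l ++ (true :: (code r ++ [false])) from rfl,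
      show code (MTree.node l' r) = code l' ++ (true :: (code r ++ [false])) from rfl]
    exact tcov_append_right _ ih
  | right l hr ih =>
    rename_i r r'
    rw [show code (MTree.node l r) = (code l ++ [true]) ++ (code r ++ [false]) by rw [code]; simp,
      show code (MTree.node l r') = (code l ++ [true]) ++ (code r' ++ [false]) by rw [code]; simp]
    exact tcov_append_left _ (tcov_append_right _ ih)

lemma tcov_parse : ∀ S : MTree, ∀ V W D1 : List Bool, IsDyck D1 → D1 ≠ [] →
    code S = V ++ false :: (D1 ++ W) →
    ∃ T, code T = V ++ D1 ++ false :: W ∧ RotStar S T := by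
  intro S
  induction S with
  | leaf =>
    intro V W D1 _ _ hS
    rw [code] at hS
    have := congrArg List.length hS
    simp at this
  | node L R ihL ihR =>
    intro V W D1 hd hne hS
    rw [code] at hS
    have hVp : V <+: code L ++ true :: (code R ++ [false]) := by
      rw [hS]; exact List.prefix_append _ _
    have hLp : code L <+: code L ++ true :: (code R ++ [false]) := List.prefix_append _ _
    rcases lt_trichotomy V.length (code L).length with hlt | heq | hgt
    · -- V strictly inside code L
      obtain ⟨a', ha⟩ : V <+: code L := List.prefix_of_prefix_length_le hVp hLp hlt.le
      rw [← ha, List.append_assoc, List.append_cancel_left_eq] at hS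
      have ha'ne : a' ≠ [] := by
        intro h
        rw [h, List.append_nil] at ha
        rw [← ha] at hlt
        simp at hlt
      obtain ⟨c, E, rfl⟩ : ∃ c E, a' = c :: E := by
        cases a' with
        | nil => exact absurd rfl ha'ne
        | cons c E => exact ⟨c, E, rfl⟩
      rw [List.cons_append, List.cons.injEq] at hS
      obtain ⟨rfl, hE⟩ := hS
      -- hE : E ++ true :: (code R ++ [false]) = D1 ++ W
      rcases le_or_gt D1.length E.length with hle | hlt2
      · -- pattern inside code L
        obtain ⟨E', rfl⟩ : D1 <+: E := by
          refine List.prefix_of_prefix_length_le ?_ ⟨true :: (code R ++ [false]), rfl⟩ hle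
          rw [hE]; exact List.prefix_append _ _
        rw [List.append_assoc, List.append_cancel_left_eq] at hE
        obtain ⟨L', hL', hrot⟩ := ihL V E' D1 hd hne (by rw [← ha])
        refine ⟨MTree.node L' R, ?_, rotStar_left R hrot⟩
        rw [code, hL', ← hE]
        simp
      · -- crossing case
        obtain ⟨D1', rfl⟩ : E <+: D1 := by
          have h1 : E <+: D1 ++ W := by rw [← hE]; exact List.prefix_append _ _
          exact List.prefix_of_prefix_length_le h1 (List.prefix_append _ _) hlt2.le
        rw [List.append_assoc, List.append_cancel_left_eq] at hE
        have hD1'ne : D1' ≠ [] := by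
          intro h; rw [h] at hlt2; simp at hlt2
        obtain ⟨c, F, rfl⟩ : ∃ c F, D1' = c :: F := by
          cases D1' with
          | nil => exact absurd rfl hD1'ne
          | cons c F => exact ⟨c, F, rfl⟩
        rw [List.cons_append, List.cons.injEq] at hE
        obtain ⟨rfl, hF⟩ := hE
        -- hF : code R ++ [false] = F ++ W
        have hbL := bal_code L
        rw [← ha, bal_append, bal_cons] at hbL
        have hVpos : 1 ≤ bal V := by
          have hp : V ++ [false] <+: code (MTree.node L R) := by
            rw [code, ← ha, List.append_assoc]
            refine ⟨E ++ true :: (code R ++ [false]), ?_⟩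
            simp
          have := code_prefix_nonneg _ _ hp
          rw [bal_append] at this
          simp at this
          omega
        have hEnn : 0 ≤ bal E := (isDyck_iff.mp hd).2 E (List.prefix_append _ _)
        have hbE : bal E = 0 ∧ bal V = 1 := by
          simp at hbL
          exact ⟨by omega, by omega⟩
        have hbD1 := (isDyck_iff.mp hd).1
        rw [bal_append, bal_cons] at hbD1
        have hbF : bal F = -1 := by simp at hbD1; omega
        have hFpre : F <+: code R ++ [false] := ⟨W, hF.symm⟩
        have hFlen : F.length = (code R).length + 1 := by
          rcases le_or_gt F.length (code R).length with h | h
          · exfalso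
            have : F <+: code R :=
              List.prefix_of_prefix_length_le hFpre (List.prefix_append _ _) h
            have := code_prefix_nonneg R _ this
            omega
          · have := hFpre.length_le
            simp at this
            omega
        have hFeq : F = code R ++ [false] := hFpre.eq_of_length (by simp [hFlen])
        have hW : W = [] := by
          rw [hFeq] at hF
          have h3 := congrArg List.length hF
          simp only [List.length_append, List.length_cons, List.length_nil] at h3
          rw [← List.length_eq_zero_iff]
          omega
        subst hW
        subst hFeq
        have hCdyck : IsDyck (V ++ [false]) := by
          rw [isDyck_iff]
          constructor
          · simp [hbE.2]
          · intro p hp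
            refine code_prefix_nonneg (MTree.node L R) p (hp.trans ?_)
            rw [code, ← ha, List.append_assoc]
            exact ⟨E ++ true :: (code R ++ [false]), by simp⟩
        have hEdyck : IsDyck E := by
          rw [isDyck_iff]
          exact ⟨hbE.1, fun p hp => (isDyck_iff.mp hd).2 p (hp.trans (List.prefix_append _ _))⟩
        obtain ⟨X, hX⟩ := dyck_code hCdyck
        obtain ⟨P, hP⟩ := dyck_code hEdyck
        obtain ⟨X1, X2, rfl⟩ : ∃ X1 X2, X = MTree.node X1 X2 := by
          cases X with
          | leaf => exact absurd (congrArg List.length hX) (by simp [code])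
          | node X1 X2 => exact ⟨X1, X2, rfl⟩
        rw [code] at hX
        have hV : code X1 ++ true :: code X2 = V := by
          have : (code X1 ++ true :: code X2) ++ [false] = V ++ [false] := by
            rw [← hX]; simp
          exact List.append_cancel_right this
        have hLeq : L = graftL (MTree.node X1 X2) P := by
          apply code_inj
          rw [graftL_code, code, hX, hP, ← ha, List.append_assoc]
          simp
        refine ⟨MTree.node X1 (MTree.node (graftL X2 P) R), ?_, ?_⟩
        · rw [code, code, graftL_code, hP, ← hV]
          simp
        · rw [hLeq]
          exact rotStar_graft P X1 X2 R
    · -- impossible: position |V| holds both true and false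
      exfalso
      have hVL : V = code L :=
        (List.prefix_of_prefix_length_le hVp hLp heq.le).eq_of_length heq
      rw [hVL, List.append_cancel_left_eq] at hS
      simp at hS
    · -- pattern inside code R
      obtain ⟨V', rfl⟩ : code L <+: V := List.prefix_of_prefix_length_le hLp hVp hgt.le
      rw [List.append_assoc, List.append_cancel_left_eq] at hS
      have hV'ne : V' ≠ [] := by
        intro h; rw [h] at hgt; simp at hgt
      obtain ⟨c, V1, rfl⟩ : ∃ c V1, V' = c :: V1 := by
        cases V' with
        | nil => exact absurd rfl hV'ne
        | cons c V1 => exact ⟨c, V1, rfl⟩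
      rw [List.cons_append, List.cons.injEq] at hS
      obtain ⟨rfl, h2⟩ := hS
      -- h2 : code R ++ [false] = V1 ++ false :: (D1 ++ W)
      have hD1len : 1 ≤ D1.length := List.length_pos_iff.mpr hne
      have hlen2 : (code R).length + 1 = V1.length + 1 + D1.length + W.length := by
        have := congrArg List.length h2
        simp at this
        omega
      obtain ⟨r', hr⟩ : V1 <+: code R := by
        refine List.prefix_of_prefix_length_le ⟨false :: (D1 ++ W), h2.symm⟩
          (List.prefix_append _ _) (by omega)
      rw [← hr, List.append_assoc, List.append_cancel_left_eq] at h2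
      have hr'ne : r' ≠ [] := by
        intro h
        rw [h, List.append_nil] at hr
        rw [← hr] at hlen2
        omega
      obtain ⟨c, G, rfl⟩ : ∃ c G, r' = c :: G := by
        cases r' with
        | nil => exact absurd rfl hr'ne
        | cons c G => exact ⟨c, G, rfl⟩
      rw [List.cons_append, List.cons.injEq] at h2
      obtain ⟨rfl, hG⟩ := h2
      -- hG : G ++ [false] = D1 ++ W
      rcases le_or_gt D1.length G.length with hle | hlt2
      · obtain ⟨G', rfl⟩ : D1 <+: G := by
          refine List.prefix_of_prefix_length_le ?_ ⟨[false], rfl⟩ hle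
          rw [hG]; exact List.prefix_append _ _
        rw [List.append_assoc, List.append_cancel_left_eq] at hG
        obtain ⟨R', hR', hrot⟩ := ihR V1 G' D1 hd hne (by rw [← hr])
        refine ⟨MTree.node L R', ?_, rotStar_right L hrot⟩
        rw [code, hR', ← hG]
        simp
      · exfalso
        have hD1p : D1 <+: G ++ [false] := ⟨W, hG.symm⟩
        have hD1len2 : D1.length = G.length + 1 := by
          have := hD1p.length_le
          simp at this
          omega
        have hD1eq : D1 = G ++ [false] := hD1p.eq_of_length (by simp [hD1len2])
        have hbR := bal_code R
        rw [← hr, bal_append, bal_cons] at hbR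
        have hV1pos : 1 ≤ bal V1 := by
          have hp : V1 ++ [false] <+: code R := ⟨G, by rw [← hr]; simp⟩
          have := code_prefix_nonneg R _ hp
          rw [bal_append] at this
          simp at this
          omega
        have hbD1 := (isDyck_iff.mp hd).1
        rw [hD1eq, bal_append] at hbD1
        simp at hbD1 hbR
        omega

lemma chain_parse {A B : List Bool} (hle : TamariLE A B) :
    ∀ S : MTree, code S = B → ∃ T, code T = A ∧ RotStar S T := by
  induction hle with
  | refl => exact fun S hS => ⟨S, hS, Relation.ReflTransGen.refl⟩
  | tail h1 h2 ih =>
    intro S hSc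
    cases h2 with
    | mk V W D1 hd hne =>
      obtain ⟨T, hT, hrot⟩ := tcov_parse S V W D1 hd hne hSc
      obtain ⟨T', hT', hrot'⟩ := ih T hT
      exact ⟨T', hT', hrot.trans hrot'⟩

lemma rotStar_tamari {x y : MTree} (h : RotStar x y) : TamariLE (code y) (code x) := by
  induction h with
  | refl => exact Relation.ReflTransGen.refl
  | tail _ h2 ih => exact Relation.ReflTransGen.head (rot_tcov h2) ih

theorem stmt8 (D1 D2 : List Bool) (h1 : IsDyck D1) (h2 : IsDyck D2)
    (hsize : D1.count true = D2.count true) (hle : TamariLE D1 D2) :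
    TamariLE (mir D2) (mir D1) := by
  obtain ⟨S, hS⟩ := dyck_code h2
  obtain ⟨T, hT, hrot⟩ := chain_parse hle S hS
  rw [← hS, ← hT, mir_code, mir_code]
  exact rotStar_tamari (rotStar_tmir hrot)
end

section
/- If P = P1 u P2 d u P3 d ⋯ u Pk d where P1, P2, …, Pk are (possibly empty) Dyck paths, then mir(P) = mir(Pk) u mir(P_{k-1}) u ⋯ u mir(P1) d^{k-1}. -/
lemma foldr_max_le {l : List ℕ} {a : ℕ} (h : ∀ x ∈ l, x ≤ a) : l.foldr max 0 ≤ a := by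
  induction l with
  | nil => simp
  | cons b t ih =>
    simp only [List.foldr_cons]
    have := h b (by simp)
    have := ih (fun x hx => h x (by simp [hx]))
    omega

lemma foldr_max_eq {l : List ℕ} {a : ℕ} (ha : a ∈ l) (h : ∀ x ∈ l, x ≤ a) :
    l.foldr max 0 = a := by
  induction l with
  | nil => cases ha
  | cons b t ih =>
    simp only [List.foldr_cons]
    rcases List.mem_cons.mp ha with rfl | ha'
    · have := foldr_max_le (fun x hx => h x (List.mem_cons_of_mem _ hx))
      omega
    · have hb := h b (by simp)
      have := ih ha' (fun x hx => h x (by simp [hx]))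
      omega

lemma mir_step (A B : List Bool) (hA : A.count true = A.count false) (hB : IsDyck B) :
    mir (A ++ true :: (B ++ [false])) = mir B ++ true :: (mir A ++ [false]) := by
  have hw : A ++ true :: (B ++ [false]) ≠ [] := by simp
  rw [mir, dif_neg hw]
  have he : (A ++ true :: (B ++ [false])).dropLast = A ++ true :: B := by
    have : A ++ true :: (B ++ [false]) = (A ++ true :: B) ++ [false] := by simp
    rw [this, List.dropLast_concat]
  rw [he]
  set e := A ++ true :: B with hedef
  have hlen : e.length = A.length + 1 + B.length := by simp [hedef]; omega
  have hj : ((List.range e.length).filter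
      (fun j => (e.take j).count true = (e.take j).count false)).foldr max 0 = A.length := by
    apply foldr_max_eq
    · rw [List.mem_filter]
      constructor
      · rw [List.mem_range]; omega
      · simp only [decide_eq_true_eq]
        rw [hedef, List.take_left]
        exact hA
    · intro x hx
      rw [List.mem_filter, List.mem_range] at hx
      obtain ⟨hx1, hx2⟩ := hx
      simp only [decide_eq_true_eq] at hx2
      by_contra hgt
      push_neg at hgt
      have hx3 : e.take x = A ++ true :: B.take (x - A.length - 1) := by
        rw [hedef, List.take_append]
        congr 1
        · rw [List.take_of_length_le (by omega)]
        · have : x - A.length = (x - A.length - 1) + 1 := by omega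
          rw [this]
          simp
      have hpre : (B.take (x - A.length - 1)).count false ≤
          (B.take (x - A.length - 1)).count true := hB.2 _ (List.take_prefix _ _)
      rw [hx3] at hx2
      simp [List.count_append, List.count_cons] at hx2
      omega
  have h1 : e.drop (A.length + 1) = B := by
    rw [hedef, List.drop_append]
    simp
  have h2 : e.take A.length = A := by rw [hedef, List.take_left]
  simp only [hj, h1, h2]

lemma blocks_bal (l : List (List Bool)) (h : ∀ Q ∈ l, IsDyck Q) :
    (l.flatMap (fun Q => true :: (Q ++ [false]))).count true =
      (l.flatMap (fun Q => true :: (Q ++ [false]))).count false := by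
  induction l with
  | nil => simp
  | cons Q t ih =>
    have hQ := (h Q (by simp)).1
    have := ih (fun R hR => h R (by simp [hR]))
    simp [List.count_append, List.count_cons]
    omega

theorem stmt9 (P1 : List Bool) (rest : List (List Bool))
    (h1 : IsDyck P1) (h : ∀ Q ∈ rest, IsDyck Q) :
    mir (P1 ++ rest.flatMap (fun Q => true :: (Q ++ [false]))) =
      (rest.reverse.map mir).flatMap (fun M => M ++ [true]) ++ mir P1 ++
        List.replicate rest.length false := by
  induction rest using List.reverseRecOn with
  | nil => simp
  | append_singleton rest' Qk ih =>
    have hQk : IsDyck Qk := h Qk (by simp)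
    have h' : ∀ Q ∈ rest', IsDyck Q := fun Q hQ => h Q (by simp [hQ])
    have hbal : (P1 ++ rest'.flatMap (fun Q => true :: (Q ++ [false]))).count true =
        (P1 ++ rest'.flatMap (fun Q => true :: (Q ++ [false]))).count false := by
      simp [List.count_append, h1.1, blocks_bal rest' h']
    have hflat : (rest' ++ [Qk]).flatMap (fun Q => true :: (Q ++ [false])) =
        rest'.flatMap (fun Q => true :: (Q ++ [false])) ++ true :: (Qk ++ [false]) := by
      simp
    rw [hflat, ← List.append_assoc, mir_step _ _ hbal hQk, ih h']
    simp [List.replicate_succ' , List.append_assoc]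
end
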